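/- Let K be the simplest cubic field with parameter a ≥ 0 and O_K = Z[ρ]. The element 1 + ρ + ρ^2 is totally positive and indecomposable, and min over totally positive δ in the codifferent O_K^∨ of Tr((1+ρ+ρ^2)δ) equals 2. -/

import Mathlib

lemma scf_not_rational (a : ℤ) (t : ℝ)
    (ht : t^3 - a*t^2 - (a+3)*t - 1 = 0) (h1 : t ≠ 1) (h2 : t ≠ -1)
    (A B : ℤ) (hrel : (A:ℝ)*t + B = 0) : A = 0 := by
  by_contra hA
  have hAne : (A:ℝ) ≠ 0 := Int.cast_ne_zero.mpr hA
  set q : ℚ := -(B : ℚ) / (A : ℚ) with hq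
  have hqt : (q:ℝ) = t := by
    rw [hq]; push_cast
    field_simp
    linarith [hrel]
  set n : ℤ := q.num with hn
  set d : ℤ := (q.den : ℤ) with hd
  have hd0 : (0:ℤ) < d := by rw [hd]; exact_mod_cast q.pos
  have hdR : (d:ℝ) ≠ 0 := by positivity
  have htnd : t = (n:ℝ)/(d:ℝ) := by
    rw [← hqt, Rat.cast_def, hn, hd]; push_cast; ring
  have hnd : (n:ℝ) = t * d := by rw [htnd]; field_simp
  have hzR : (n:ℝ)^3 - a*n^2*d - (a+3)*n*d^2 - d^3 = 0 := by
    linear_combination (d:ℝ)^3 * ht +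
      ((n:ℝ)^2 + n*(t*d) + (t*d)^2 - a*d*(n + t*d) - (a+3)*d^2) * hnd
  have hz : n^3 - a*n^2*d - (a+3)*n*d^2 - d^3 = 0 := by exact_mod_cast hzR
  have hcop : IsCoprime n d := by
    rw [Int.isCoprime_iff_gcd_eq_one]
    exact q.reduced
  have hdvd : d ∣ n^3 := ⟨a*n^2 + (a+3)*n*d + d^2, by linear_combination hz⟩
  have hdu : IsUnit d := (hcop.symm.pow_right (n := 3)).isUnit_of_dvd hdvd
  have hd1 : d = 1 := by
    rcases Int.isUnit_iff.mp hdu with h | h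
    · exact h
    · omega
  have htn : t = (n:ℝ) := by rw [htnd, hd1]; norm_num
  have hz2 : n * (n^2 - a*n - (a+3)) = 1 := by
    have := hz; rw [hd1] at this; ring_nf at this ⊢; omega
  have hnu : IsUnit n := IsUnit.of_mul_eq_one _ hz2
  rcases Int.isUnit_iff.mp hnu with h | h
  · exact h1 (by rw [htn, h]; norm_num)
  · exact h2 (by rw [htn, h]; norm_num)

lemma scf_vieta (a : ℤ) (ρ ρ' ρ'' : ℝ)
    (hρ : ρ^3 - a*ρ^2 - (a+3)*ρ - 1 = 0)
    (hρ' : ρ'^3 - a*ρ'^2 - (a+3)*ρ' - 1 = 0)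
    (hρ'' : ρ''^3 - a*ρ''^2 - (a+3)*ρ'' - 1 = 0)
    (h12 : ρ ≠ ρ') (h13 : ρ ≠ ρ'') (h23 : ρ' ≠ ρ'') :
    ρ+ρ'+ρ'' = a ∧ ρ*ρ'+ρ*ρ''+ρ'*ρ'' = -(a+3) ∧ ρ*ρ'*ρ'' = 1 := by
  have d12 : ρ - ρ' ≠ 0 := sub_ne_zero.mpr h12
  have d13 : ρ - ρ'' ≠ 0 := sub_ne_zero.mpr h13
  have d23 : ρ' - ρ'' ≠ 0 := sub_ne_zero.mpr h23
  have q12 : ρ^2 + ρ*ρ' + ρ'^2 - a*(ρ+ρ') - (a+3) = 0 := by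
    have h : (ρ - ρ') * (ρ^2 + ρ*ρ' + ρ'^2 - a*(ρ+ρ') - (a+3)) = 0 := by
      linear_combination hρ - hρ'
    rcases mul_eq_zero.mp h with h | h
    · exact absurd h d12
    · exact h
  have q13 : ρ^2 + ρ*ρ'' + ρ''^2 - a*(ρ+ρ'') - (a+3) = 0 := by
    have h : (ρ - ρ'') * (ρ^2 + ρ*ρ'' + ρ''^2 - a*(ρ+ρ'') - (a+3)) = 0 := by
      linear_combination hρ - hρ''
    rcases mul_eq_zero.mp h with h | h
    · exact absurd h d13
    · exact h
  have he1 : ρ+ρ'+ρ'' = a := by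
    have h : (ρ' - ρ'') * (ρ+ρ'+ρ''-a) = 0 := by linear_combination q12 - q13
    rcases mul_eq_zero.mp h with h | h
    · exact absurd h d23
    · linarith [h]
  have he2 : ρ*ρ'+ρ*ρ''+ρ'*ρ'' = -(a+3) := by
    linear_combination (ρ+ρ') * he1 - q12
  refine ⟨he1, he2, ?_⟩
  linear_combination hρ + ρ*he2 - ρ^2*he1

lemma scf_indep (a : ℤ) (ha : 0 ≤ a) (ρ ρ' ρ'' : ℝ)
    (hρ : ρ^3 - a*ρ^2 - (a+3)*ρ - 1 = 0)
    (hρ' : ρ'^3 - a*ρ'^2 - (a+3)*ρ' - 1 = 0)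
    (hρ'' : ρ''^3 - a*ρ''^2 - (a+3)*ρ'' - 1 = 0)
    (hb1 : (a:ℝ) + 1 < ρ) (hb2 : -2 < ρ' ∧ ρ' < -1) (hb3 : -1 < ρ'' ∧ ρ'' < 0)
    (q₀ q₁ q₂ : ℤ) (h : (q₀:ℝ) + q₁*ρ + q₂*ρ^2 = 0) : q₀ = 0 ∧ q₁ = 0 ∧ q₂ = 0 := by
  have haR : (0:ℝ) ≤ (a:ℝ) := by exact_mod_cast ha
  obtain ⟨hb2a, hb2b⟩ := hb2
  obtain ⟨hb3a, hb3b⟩ := hb3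
  have hρ1 : ρ ≠ 1 := by intro hh; rw [hh] at hb1; linarith
  have hρm1 : ρ ≠ -1 := by intro hh; rw [hh] at hb1; linarith
  have hρ'1 : ρ' ≠ 1 := by intro hh; rw [hh] at hb2b; linarith
  have hρ'm1 : ρ' ≠ -1 := by intro hh; rw [hh] at hb2b; linarith
  have hρ''1 : ρ'' ≠ 1 := by intro hh; rw [hh] at hb3b; linarith
  have hρ''m1 : ρ'' ≠ -1 := by intro hh; rw [hh] at hb3a; linarith
  have h12 : ρ ≠ ρ' := by intro hh; rw [hh] at hb1; linarith
  have h13 : ρ ≠ ρ'' := by intro hh; rw [hh] at hb1; linarith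
  have h23 : ρ' ≠ ρ'' := by intro hh; rw [hh] at hb2b; linarith
  by_cases hq2 : q₂ = 0
  · subst hq2
    have hA : q₁ = 0 := by
      refine scf_not_rational a ρ hρ hρ1 hρm1 q₁ q₀ ?_
      push_cast at h ⊢; linarith
    subst hA
    have : (q₀:ℝ) = 0 := by push_cast at h; linarith
    exact ⟨by exact_mod_cast this, rfl, rfl⟩
  · exfalso
    have hq2R : (q₂:ℝ) ≠ 0 := Int.cast_ne_zero.mpr hq2
    set A : ℤ := q₀*q₂ + (a+3)*q₂^2 - q₁^2 - a*q₁*q₂ with hAdef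
    set B : ℤ := q₂^2 - q₀*q₁ - a*q₀*q₂ with hBdef
    have hAB : (A:ℝ)*ρ + B = 0 := by
      rw [hAdef, hBdef]; push_cast
      linear_combination ((q₂:ℝ)*ρ - q₁ - (a:ℝ)*q₂) * h - (q₂:ℝ)^2 * hρ
    have hA0 : A = 0 := scf_not_rational a ρ hρ hρ1 hρm1 A B hAB
    have hB0 : B = 0 := by
      have hBR : (B:ℝ) = 0 := by rw [hA0] at hAB; push_cast at hAB; linarith
      exact_mod_cast hBR
    obtain ⟨s, hs⟩ : ∃ s : ℝ, (q₂:ℝ)*s - ((q₁:ℝ) + a*q₂) = 0 :=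
      ⟨((q₁:ℝ) + a*q₂)/q₂, by field_simp; ring⟩
    have hfs : s^3 - a*s^2 - (a+3)*s - 1 = 0 := by
      have hfact : (q₂:ℝ)^2*(s^3 - a*s^2 - (a+3)*s - 1)
          = ((q₂:ℝ)*s^2 + q₁*s + q₀)*((q₂:ℝ)*s - (q₁ + a*q₂)) - ((A:ℝ)*s + B) := by
        rw [hAdef, hBdef]; push_cast; ring
      have hz : (q₂:ℝ)^2*(s^3 - a*s^2 - (a+3)*s - 1) = 0 := by
        rw [hfact, hs, hA0, hB0]; push_cast; ring
      rcases mul_eq_zero.mp hz with h' | h'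
      · exact absurd h' (pow_ne_zero 2 hq2R)
      · exact h'
    obtain ⟨he1, he2, he3⟩ := scf_vieta a ρ ρ' ρ'' hρ hρ' hρ'' h12 h13 h23
    have hroots : (s-ρ)*(s-ρ')*(s-ρ'') = 0 := by
      linear_combination hfs - s^2*he1 + s*he2 - he3
    have key : ∀ t : ℝ, t^3 - a*t^2 - (a+3)*t - 1 = 0 → t ≠ 1 → t ≠ -1 → s = t → False := by
      intro t hc hn1 hn2 hst
      have : q₂ = 0 := by
        refine scf_not_rational a t hc hn1 hn2 q₂ (-(q₁ + a*q₂)) ?_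
        rw [← hst]; push_cast; linarith [hs]
      exact hq2 this
    rcases mul_eq_zero.mp hroots with h' | h'
    · rcases mul_eq_zero.mp h' with h'' | h''
      · exact key ρ hρ hρ1 hρm1 (by linarith [sub_eq_zero.mp h''])
      · exact key ρ' hρ' hρ'1 hρ'm1 (sub_eq_zero.mp h'')
    · exact key ρ'' hρ'' hρ''1 hρ''m1 (sub_eq_zero.mp h')

lemma scf_lagrange (ρ ρ' ρ'' A₂ A₁ A₀ : ℝ) (h12 : ρ ≠ ρ') (h13 : ρ ≠ ρ'') (h23 : ρ' ≠ ρ'') :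
    (A₂*ρ^2+A₁*ρ+A₀)/((ρ-ρ')*(ρ-ρ'')) + (A₂*ρ'^2+A₁*ρ'+A₀)/((ρ'-ρ)*(ρ'-ρ''))
      + (A₂*ρ''^2+A₁*ρ''+A₀)/((ρ''-ρ)*(ρ''-ρ')) = A₂ := by
  have d1 : ρ - ρ' ≠ 0 := sub_ne_zero.mpr h12
  have d2 : ρ - ρ'' ≠ 0 := sub_ne_zero.mpr h13
  have d3 : ρ' - ρ'' ≠ 0 := sub_ne_zero.mpr h23
  have d1' : ρ' - ρ ≠ 0 := sub_ne_zero.mpr h12.symm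
  have d2' : ρ'' - ρ ≠ 0 := sub_ne_zero.mpr h13.symm
  have d3' : ρ'' - ρ' ≠ 0 := sub_ne_zero.mpr h23.symm
  field_simp
  ring

lemma scf_trace (a : ℤ) (ρ ρ' ρ'' : ℝ)
    (hρ : ρ^3 - a*ρ^2 - (a+3)*ρ - 1 = 0)
    (hρ' : ρ'^3 - a*ρ'^2 - (a+3)*ρ' - 1 = 0)
    (hρ'' : ρ''^3 - a*ρ''^2 - (a+3)*ρ'' - 1 = 0)
    (h12 : ρ ≠ ρ') (h13 : ρ ≠ ρ'') (h23 : ρ' ≠ ρ'')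
    (hd1 : 3*ρ^2 - 2*a*ρ - (a+3) = (ρ-ρ')*(ρ-ρ''))
    (hd2 : 3*ρ'^2 - 2*a*ρ' - (a+3) = (ρ'-ρ)*(ρ'-ρ''))
    (hd3 : 3*ρ''^2 - 2*a*ρ'' - (a+3) = (ρ''-ρ)*(ρ''-ρ'))
    (b₀ b₁ b₂ x y z : ℤ) :
    ((b₀:ℝ)+b₁*ρ+b₂*ρ^2) * (((x:ℝ) + y*ρ + z*ρ^2) / (3*ρ^2 - 2*a*ρ - (a+3)))
    + ((b₀:ℝ)+b₁*ρ'+b₂*ρ'^2) * (((x:ℝ) + y*ρ' + z*ρ'^2) / (3*ρ'^2 - 2*a*ρ' - (a+3)))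
    + ((b₀:ℝ)+b₁*ρ''+b₂*ρ''^2) * (((x:ℝ) + y*ρ'' + z*ρ''^2) / (3*ρ''^2 - 2*a*ρ'' - (a+3)))
    = ((b₀*z + b₁*(y+a*z) + b₂*(x+a*y+(a^2+a+3)*z) : ℤ) : ℝ) := by
  set A₂ : ℝ := ((b₀:ℝ)*z + b₁*y + b₂*x) + (a:ℝ)*((b₁:ℝ)*z + b₂*y) + ((a:ℝ)^2+a+3)*((b₂:ℝ)*z) with hA2
  set A₁ : ℝ := ((b₀:ℝ)*y + b₁*x) + ((a:ℝ)+3)*((b₁:ℝ)*z + b₂*y) + ((a:ℝ)^2+3*a+1)*((b₂:ℝ)*z) with hA1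
  set A₀ : ℝ := ((b₀:ℝ)*x) + ((b₁:ℝ)*z + b₂*y) + (a:ℝ)*((b₂:ℝ)*z) with hA0
  have g1 : ((b₀:ℝ)+b₁*ρ+b₂*ρ^2) * (((x:ℝ) + y*ρ + z*ρ^2)) = A₂*ρ^2+A₁*ρ+A₀ := by
    rw [hA2, hA1, hA0]
    linear_combination ((b₁:ℝ)*z + b₂*y) * hρ + ((b₂:ℝ)*z)*(ρ + a) * hρ
  have g2 : ((b₀:ℝ)+b₁*ρ'+b₂*ρ'^2) * (((x:ℝ) + y*ρ' + z*ρ'^2)) = A₂*ρ'^2+A₁*ρ'+A₀ := by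
    rw [hA2, hA1, hA0]
    linear_combination ((b₁:ℝ)*z + b₂*y) * hρ' + ((b₂:ℝ)*z)*(ρ' + a) * hρ'
  have g3 : ((b₀:ℝ)+b₁*ρ''+b₂*ρ''^2) * (((x:ℝ) + y*ρ'' + z*ρ''^2)) = A₂*ρ''^2+A₁*ρ''+A₀ := by
    rw [hA2, hA1, hA0]
    linear_combination ((b₁:ℝ)*z + b₂*y) * hρ'' + ((b₂:ℝ)*z)*(ρ'' + a) * hρ''
  rw [← mul_div_assoc, ← mul_div_assoc, ← mul_div_assoc, g1, g2, g3, hd1, hd2, hd3,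
    scf_lagrange ρ ρ' ρ'' A₂ A₁ A₀ h12 h13 h23, hA2]
  push_cast; ring


-- upper bound for the largest root
lemma scf_rho_ub (a : ℤ) (ha : 0 ≤ a) (ρ : ℝ)
    (hρ : ρ^3 - a*ρ^2 - (a+3)*ρ - 1 = 0) (hb1 : (a:ℝ) + 1 < ρ) : ρ < (a:ℝ) + 2 := by
  have haR : (0:ℝ) ≤ (a:ℝ) := by exact_mod_cast ha
  by_contra hcon
  push_neg at hcon
  nlinarith [hρ, mul_pos (show (0:ℝ) < ρ by linarith) (show (0:ℝ) < ρ - a - 1 by linarith),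
    mul_pos (show (0:ℝ) < ρ by linarith) (show (0:ℝ) < ρ by linarith)]

-- numerator signs for δ₂ = (-(a+2), -a, 1)
lemma scf_n2_pos_rho (a : ℤ) (ha : 0 ≤ a) (ρ : ℝ)
    (hρ : ρ^3 - a*ρ^2 - (a+3)*ρ - 1 = 0) (hb1 : (a:ℝ) + 1 < ρ) :
    (0:ℝ) < ((-(a+2):ℤ):ℝ) + ((-a:ℤ):ℝ)*ρ + ((1:ℤ):ℝ)*ρ^2 := by
  have haR : (0:ℝ) ≤ (a:ℝ) := by exact_mod_cast ha
  have hid : (ρ^2 - (a:ℝ)*ρ - ((a:ℝ)+2))*ρ = ρ + 1 := by linear_combination hρ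
  push_cast
  nlinarith [hid, hb1, haR]

lemma scf_n2_pos_rho' (a : ℤ) (ρ' : ℝ)
    (hρ' : ρ'^3 - a*ρ'^2 - (a+3)*ρ' - 1 = 0) (h1 : -2 < ρ') (h2 : ρ' < -1) :
    (0:ℝ) < ((-(a+2):ℤ):ℝ) + ((-a:ℤ):ℝ)*ρ' + ((1:ℤ):ℝ)*ρ'^2 := by
  have hid : (ρ'^2 - (a:ℝ)*ρ' - ((a:ℝ)+2))*ρ' = ρ' + 1 := by linear_combination hρ'
  push_cast
  nlinarith [hid, h1, h2]

lemma scf_n2_neg_rho'' (a : ℤ) (ρ'' : ℝ)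
    (hρ'' : ρ''^3 - a*ρ''^2 - (a+3)*ρ'' - 1 = 0) (h1 : -1 < ρ'') (h2 : ρ'' < 0) :
    ((-(a+2):ℤ):ℝ) + ((-a:ℤ):ℝ)*ρ'' + ((1:ℤ):ℝ)*ρ''^2 < 0 := by
  have hid : (ρ''^2 - (a:ℝ)*ρ'' - ((a:ℝ)+2))*ρ'' = ρ'' + 1 := by linear_combination hρ''
  push_cast
  nlinarith [hid, h1, h2]

-- numerator signs for δ₁ = (-1, -(a+1), 1)
lemma scf_n1_pos_rho (a : ℤ) (ha : 0 ≤ a) (ρ : ℝ)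
    (hρ : ρ^3 - a*ρ^2 - (a+3)*ρ - 1 = 0) (hb1 : (a:ℝ) + 1 < ρ) :
    (0:ℝ) < ((-1:ℤ):ℝ) + ((-(a+1):ℤ):ℝ)*ρ + ((1:ℤ):ℝ)*ρ^2 := by
  have haR : (0:ℝ) ≤ (a:ℝ) := by exact_mod_cast ha
  have hub : ρ < (a:ℝ) + 2 := scf_rho_ub a ha ρ hρ hb1
  have hid : (ρ^2 - ((a:ℝ)+1)*ρ - 1)*ρ = ρ*((a:ℝ)+2-ρ) + 1 := by linear_combination hρ
  push_cast
  nlinarith [hid, mul_pos (show (0:ℝ) < ρ by linarith) (show (0:ℝ) < (a:ℝ)+2-ρ by linarith), hb1]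

lemma scf_n1_pos_rho' (a : ℤ) (ha : 0 ≤ a) (ρ' : ℝ) (h1 : -2 < ρ') (h2 : ρ' < -1) :
    (0:ℝ) < ((-1:ℤ):ℝ) + ((-(a+1):ℤ):ℝ)*ρ' + ((1:ℤ):ℝ)*ρ'^2 := by
  have haR : (0:ℝ) ≤ (a:ℝ) := by exact_mod_cast ha
  push_cast
  nlinarith [mul_pos (show (0:ℝ) < -1-ρ' by linarith) (show (0:ℝ) < -ρ' by linarith),
    mul_nonneg haR (show (0:ℝ) ≤ -ρ' by linarith)]

lemma scf_u_pos (a : ℤ) (ha : 0 ≤ a) (ρ'' : ℝ)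
    (hρ'' : ρ''^3 - a*ρ''^2 - (a+3)*ρ'' - 1 = 0) (h1 : -1 < ρ'') (h2 : ρ'' < 0) :
    (0:ℝ) < ((a:ℝ)+2)*ρ'' + 1 := by
  have haR : (0:ℝ) ≤ (a:ℝ) := by exact_mod_cast ha
  by_contra hcon
  push_neg at hcon
  have hub : -(a:ℝ)-1 < ((a:ℝ)+2)*ρ''+1 := by nlinarith [h1, haR]
  have hsq : (((a:ℝ)+2)*ρ''+1)^2 ≤ -(((a:ℝ)+1))*(((a:ℝ)+2)*ρ''+1) := by nlinarith [hub, hcon]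
  have hqneg : (((a:ℝ)+2)*ρ''+1)^2 - ((a:ℝ)^2+2*a+3)*(((a:ℝ)+2)*ρ''+1)
      - ((a:ℝ)^3+5*a^2+12*a+9) < 0 := by nlinarith [hsq, hub, haR]
  have hid : (((a:ℝ)+2)*ρ''+1) * ((((a:ℝ)+2)*ρ''+1)^2 - ((a:ℝ)^2+2*a+3)*(((a:ℝ)+2)*ρ''+1)
      - ((a:ℝ)^3+5*a^2+12*a+9)) = -(2*(a:ℝ)+3) := by
    linear_combination ((a:ℝ)+2)^3 * hρ''
  nlinarith [hid, mul_nonneg (show (0:ℝ) ≤ -(((a:ℝ)+2)*ρ''+1) by linarith)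
    (show (0:ℝ) ≤ -((((a:ℝ)+2)*ρ''+1)^2 - ((a:ℝ)^2+2*a+3)*(((a:ℝ)+2)*ρ''+1)
      - ((a:ℝ)^3+5*a^2+12*a+9)) by linarith)]

lemma scf_n1_neg_rho'' (a : ℤ) (ha : 0 ≤ a) (ρ'' : ℝ)
    (hρ'' : ρ''^3 - a*ρ''^2 - (a+3)*ρ'' - 1 = 0) (h1 : -1 < ρ'') (h2 : ρ'' < 0) :
    ((-1:ℤ):ℝ) + ((-(a+1):ℤ):ℝ)*ρ'' + ((1:ℤ):ℝ)*ρ''^2 < 0 := by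
  have hu := scf_u_pos a ha ρ'' hρ'' h1 h2
  have hm : (0:ℝ) < -ρ''^2 + ((a:ℝ)+2)*ρ'' + 1 := by
    have hid2 : (-ρ''^2 + ((a:ℝ)+2)*ρ'' + 1)*(ρ''+2) = ((a:ℝ)+2)*ρ''+1 := by
      linear_combination -hρ''
    nlinarith [hid2, hu, h1]
  have hid3 : (ρ''^2 - ((a:ℝ)+1)*ρ'' - 1)*ρ'' = -ρ''^2 + ((a:ℝ)+2)*ρ'' + 1 := by
    linear_combination hρ''
  push_cast
  nlinarith [hid3, hm, h2]

-- indecomposability (part 2), stated without the let-definitions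
set_option maxHeartbeats 1000000 in
lemma scf_indecomposable (a : ℤ) (ha : 0 ≤ a) (ρ ρ' ρ'' : ℝ)
    (hρ : ρ^3 - a*ρ^2 - (a+3)*ρ - 1 = 0)
    (hρ' : ρ'^3 - a*ρ'^2 - (a+3)*ρ' - 1 = 0)
    (hρ'' : ρ''^3 - a*ρ''^2 - (a+3)*ρ'' - 1 = 0)
    (hb1 : (a:ℝ) + 1 < ρ) (hb2 : -2 < ρ' ∧ ρ' < -1) (hb3 : -1 < ρ'' ∧ ρ'' < 0) :
    ¬ ∃ b₀ b₁ b₂ c₀ c₁ c₂ : ℤ,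
      (∀ r ∈ ({ρ, ρ', ρ''} : Set ℝ), 0 < (b₀:ℝ) + b₁*r + b₂*r^2) ∧
      (∀ r ∈ ({ρ, ρ', ρ''} : Set ℝ), 0 < (c₀:ℝ) + c₁*r + c₂*r^2) ∧
      (1 + ρ + ρ^2 = ((b₀:ℝ) + b₁*ρ + b₂*ρ^2) + ((c₀:ℝ) + c₁*ρ + c₂*ρ^2)) := by
  obtain ⟨hb2a, hb2b⟩ := hb2
  obtain ⟨hb3a, hb3b⟩ := hb3
  have haR : (0:ℝ) ≤ (a:ℝ) := by exact_mod_cast ha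
  have memρ : ρ ∈ ({ρ, ρ', ρ''} : Set ℝ) := Set.mem_insert _ _
  have memρ' : ρ' ∈ ({ρ, ρ', ρ''} : Set ℝ) := Set.mem_insert_of_mem _ (Set.mem_insert _ _)
  have memρ'' : ρ'' ∈ ({ρ, ρ', ρ''} : Set ℝ) :=
    Set.mem_insert_of_mem _ (Set.mem_insert_of_mem _ rfl)
  have h12 : ρ ≠ ρ' := by intro hh; rw [hh] at hb1; linarith
  have h13 : ρ ≠ ρ'' := by intro hh; rw [hh] at hb1; linarith
  have h23 : ρ' ≠ ρ'' := by intro hh; rw [hh] at hb2b; linarith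
  obtain ⟨he1, he2, he3⟩ := scf_vieta a ρ ρ' ρ'' hρ hρ' hρ'' h12 h13 h23
  have hd1 : 3*ρ^2 - 2*(a:ℝ)*ρ - ((a:ℝ)+3) = (ρ-ρ')*(ρ-ρ'') := by
    linear_combination 2*ρ*he1 - he2
  have hd2 : 3*ρ'^2 - 2*(a:ℝ)*ρ' - ((a:ℝ)+3) = (ρ'-ρ)*(ρ'-ρ'') := by
    linear_combination 2*ρ'*he1 - he2
  have hd3 : 3*ρ''^2 - 2*(a:ℝ)*ρ'' - ((a:ℝ)+3) = (ρ''-ρ)*(ρ''-ρ') := by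
    linear_combination 2*ρ''*he1 - he2
  have hf1 : (0:ℝ) < 3*ρ^2 - 2*(a:ℝ)*ρ - ((a:ℝ)+3) := by
    rw [hd1]; exact mul_pos (by linarith) (by linarith)
  have hf2 : (0:ℝ) < 3*ρ'^2 - 2*(a:ℝ)*ρ' - ((a:ℝ)+3) := by
    rw [hd2]; exact mul_pos_of_neg_of_neg (by linarith) (by linarith)
  have hf3 : 3*ρ''^2 - 2*(a:ℝ)*ρ'' - ((a:ℝ)+3) < 0 := by
    rw [hd3]; exact mul_neg_of_neg_of_pos (by linarith) (by linarith)
  have hδ1ρ : (0:ℝ) < (((-1:ℤ):ℝ) + ((-(a+1):ℤ):ℝ)*ρ + ((1:ℤ):ℝ)*ρ^2) / (3*ρ^2 - 2*(a:ℝ)*ρ - ((a:ℝ)+3)) :=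
    div_pos (scf_n1_pos_rho a ha ρ hρ hb1) hf1
  have hδ1ρ' : (0:ℝ) < (((-1:ℤ):ℝ) + ((-(a+1):ℤ):ℝ)*ρ' + ((1:ℤ):ℝ)*ρ'^2) / (3*ρ'^2 - 2*(a:ℝ)*ρ' - ((a:ℝ)+3)) :=
    div_pos (scf_n1_pos_rho' a ha ρ' hb2a hb2b) hf2
  have hδ1ρ'' : (0:ℝ) < (((-1:ℤ):ℝ) + ((-(a+1):ℤ):ℝ)*ρ'' + ((1:ℤ):ℝ)*ρ''^2) / (3*ρ''^2 - 2*(a:ℝ)*ρ'' - ((a:ℝ)+3)) :=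
    div_pos_of_neg_of_neg (scf_n1_neg_rho'' a ha ρ'' hρ'' hb3a hb3b) hf3
  have hδ2ρ : (0:ℝ) < (((-(a+2):ℤ):ℝ) + ((-a:ℤ):ℝ)*ρ + ((1:ℤ):ℝ)*ρ^2) / (3*ρ^2 - 2*(a:ℝ)*ρ - ((a:ℝ)+3)) :=
    div_pos (scf_n2_pos_rho a ha ρ hρ hb1) hf1
  have hδ2ρ' : (0:ℝ) < (((-(a+2):ℤ):ℝ) + ((-a:ℤ):ℝ)*ρ' + ((1:ℤ):ℝ)*ρ'^2) / (3*ρ'^2 - 2*(a:ℝ)*ρ' - ((a:ℝ)+3)) :=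
    div_pos (scf_n2_pos_rho' a ρ' hρ' hb2a hb2b) hf2
  have hδ2ρ'' : (0:ℝ) < (((-(a+2):ℤ):ℝ) + ((-a:ℤ):ℝ)*ρ'' + ((1:ℤ):ℝ)*ρ''^2) / (3*ρ''^2 - 2*(a:ℝ)*ρ'' - ((a:ℝ)+3)) :=
    div_pos_of_neg_of_neg (scf_n2_neg_rho'' a ρ'' hρ'' hb3a hb3b) hf3
  rintro ⟨b₀, b₁, b₂, c₀, c₁, c₂, hb, hc, hsum⟩
  have hqrel : ((b₀+c₀-1:ℤ):ℝ) + ((b₁+c₁-1:ℤ):ℝ)*ρ + ((b₂+c₂-1:ℤ):ℝ)*ρ^2 = 0 := by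
    push_cast; linarith [hsum]
  obtain ⟨hz0, hz1, hz2⟩ := scf_indep a ha ρ ρ' ρ'' hρ hρ' hρ'' hb1 ⟨hb2a, hb2b⟩
    ⟨hb3a, hb3b⟩ _ _ _ hqrel
  have e1b := scf_trace a ρ ρ' ρ'' hρ hρ' hρ'' h12 h13 h23 hd1 hd2 hd3
    b₀ b₁ b₂ (-1) (-(a+1)) 1
  have e1c := scf_trace a ρ ρ' ρ'' hρ hρ' hρ'' h12 h13 h23 hd1 hd2 hd3
    c₀ c₁ c₂ (-1) (-(a+1)) 1
  have e2b := scf_trace a ρ ρ' ρ'' hρ hρ' hρ'' h12 h13 h23 hd1 hd2 hd3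
    b₀ b₁ b₂ (-(a+2)) (-a) 1
  have e2c := scf_trace a ρ ρ' ρ'' hρ hρ' hρ'' h12 h13 h23 hd1 hd2 hd3
    c₀ c₁ c₂ (-(a+2)) (-a) 1
  have p1b : (0:ℝ) < ((b₀*1 + b₁*(-(a+1)+a*1) + b₂*(-1+a*(-(a+1))+(a^2+a+3)*1) : ℤ) : ℝ) := by
    rw [← e1b]
    exact add_pos (add_pos (mul_pos (hb ρ memρ) hδ1ρ) (mul_pos (hb ρ' memρ') hδ1ρ'))
      (mul_pos (hb ρ'' memρ'') hδ1ρ'')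
  have p1c : (0:ℝ) < ((c₀*1 + c₁*(-(a+1)+a*1) + c₂*(-1+a*(-(a+1))+(a^2+a+3)*1) : ℤ) : ℝ) := by
    rw [← e1c]
    exact add_pos (add_pos (mul_pos (hc ρ memρ) hδ1ρ) (mul_pos (hc ρ' memρ') hδ1ρ'))
      (mul_pos (hc ρ'' memρ'') hδ1ρ'')
  have p2b : (0:ℝ) < ((b₀*1 + b₁*(-a+a*1) + b₂*(-(a+2)+a*(-a)+(a^2+a+3)*1) : ℤ) : ℝ) := by
    rw [← e2b]
    exact add_pos (add_pos (mul_pos (hb ρ memρ) hδ2ρ) (mul_pos (hb ρ' memρ') hδ2ρ'))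
      (mul_pos (hb ρ'' memρ'') hδ2ρ'')
  have p2c : (0:ℝ) < ((c₀*1 + c₁*(-a+a*1) + c₂*(-(a+2)+a*(-a)+(a^2+a+3)*1) : ℤ) : ℝ) := by
    rw [← e2c]
    exact add_pos (add_pos (mul_pos (hc ρ memρ) hδ2ρ) (mul_pos (hc ρ' memρ') hδ2ρ'))
      (mul_pos (hc ρ'' memρ'') hδ2ρ'')
  have i1b : 0 < b₀*1 + b₁*(-(a+1)+a*1) + b₂*(-1+a*(-(a+1))+(a^2+a+3)*1) := by exact_mod_cast p1b
  have i1c : 0 < c₀*1 + c₁*(-(a+1)+a*1) + c₂*(-1+a*(-(a+1))+(a^2+a+3)*1) := by exact_mod_cast p1c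
  have i2b : 0 < b₀*1 + b₁*(-a+a*1) + b₂*(-(a+2)+a*(-a)+(a^2+a+3)*1) := by exact_mod_cast p2b
  have i2c : 0 < c₀*1 + c₁*(-a+a*1) + c₂*(-(a+2)+a*(-a)+(a^2+a+3)*1) := by exact_mod_cast p2c
  rw [show b₀*1 + b₁*(-(a+1)+a*1) + b₂*(-1+a*(-(a+1))+(a^2+a+3)*1) = b₀ - b₁ + 2*b₂ from by ring] at i1b
  rw [show c₀*1 + c₁*(-(a+1)+a*1) + c₂*(-1+a*(-(a+1))+(a^2+a+3)*1) = c₀ - c₁ + 2*c₂ from by ring] at i1c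
  rw [show b₀*1 + b₁*(-a+a*1) + b₂*(-(a+2)+a*(-a)+(a^2+a+3)*1) = b₀ + b₂ from by ring] at i2b
  rw [show c₀*1 + c₁*(-a+a*1) + c₂*(-(a+2)+a*(-a)+(a^2+a+3)*1) = c₀ + c₂ from by ring] at i2c
  have hb0 : b₀ = 1 - b₂ := by omega
  have hb1' : b₁ = b₂ := by omega
  have hc0 : c₀ = b₂ := by omega
  have hc1 : c₁ = 1 - b₂ := by omega
  have hc2 : c₂ = 1 - b₂ := by omega
  clear e1b e1c e2b e2c p1b p1c p2b p2c hδ1ρ hδ1ρ' hδ1ρ'' hδ2ρ hδ2ρ' hδ2ρ'' hqrel hsum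
  have hbpp := hb ρ'' memρ''
  have hcpp := hc ρ'' memρ''
  clear hb hc
  rw [hb0, hb1'] at hbpp
  rw [hc0, hc1, hc2] at hcpp
  push_cast at hbpp hcpp
  have hwneg : (0:ℝ) ≤ -(ρ'' + ρ''^2) := by nlinarith [mul_nonneg (show (0:ℝ) ≤ -ρ'' by linarith) (show (0:ℝ) ≤ 1 + ρ'' by linarith)]
  rcases le_or_gt b₂ 0 with hm | hm
  · have hmR : (b₂:ℝ) ≤ 0 := by exact_mod_cast hm
    nlinarith [hcpp, hmR, mul_nonneg (show (0:ℝ) ≤ 1 - (b₂:ℝ) by linarith) hwneg]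
  · have hmR : (1:ℝ) ≤ (b₂:ℝ) := by exact_mod_cast hm
    nlinarith [hbpp, hmR, mul_nonneg (show (0:ℝ) ≤ (b₂:ℝ) - 1 by linarith) hwneg, hwneg]

lemma scf_fp_signs (a : ℤ) (ha : 0 ≤ a) (ρ ρ' ρ'' : ℝ)
    (hρ : ρ^3 - a*ρ^2 - (a+3)*ρ - 1 = 0)
    (hρ' : ρ'^3 - a*ρ'^2 - (a+3)*ρ' - 1 = 0)
    (hρ'' : ρ''^3 - a*ρ''^2 - (a+3)*ρ'' - 1 = 0)
    (hb1 : (a:ℝ) + 1 < ρ) (hb2 : -2 < ρ' ∧ ρ' < -1) (hb3 : -1 < ρ'' ∧ ρ'' < 0) :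
    ((0:ℝ) < 3*ρ^2 - 2*(a:ℝ)*ρ - ((a:ℝ)+3)) ∧ ((0:ℝ) < 3*ρ'^2 - 2*(a:ℝ)*ρ' - ((a:ℝ)+3))
      ∧ (3*ρ''^2 - 2*(a:ℝ)*ρ'' - ((a:ℝ)+3) < 0) := by
  obtain ⟨hb2a, hb2b⟩ := hb2
  obtain ⟨hb3a, hb3b⟩ := hb3
  have haR : (0:ℝ) ≤ (a:ℝ) := by exact_mod_cast ha
  have h12 : ρ ≠ ρ' := by intro hh; rw [hh] at hb1; linarith
  have h13 : ρ ≠ ρ'' := by intro hh; rw [hh] at hb1; linarith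
  have h23 : ρ' ≠ ρ'' := by intro hh; rw [hh] at hb2b; linarith
  obtain ⟨he1, he2, he3⟩ := scf_vieta a ρ ρ' ρ'' hρ hρ' hρ'' h12 h13 h23
  refine ⟨?_, ?_, ?_⟩
  · rw [show 3*ρ^2 - 2*(a:ℝ)*ρ - ((a:ℝ)+3) = (ρ-ρ')*(ρ-ρ'') from by
      linear_combination 2*ρ*he1 - he2]
    exact mul_pos (by linarith) (by linarith)
  · rw [show 3*ρ'^2 - 2*(a:ℝ)*ρ' - ((a:ℝ)+3) = (ρ'-ρ)*(ρ'-ρ'') from by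
      linear_combination 2*ρ'*he1 - he2]
    exact mul_pos_of_neg_of_neg (by linarith) (by linarith)
  · rw [show 3*ρ''^2 - 2*(a:ℝ)*ρ'' - ((a:ℝ)+3) = (ρ''-ρ)*(ρ''-ρ') from by
      linear_combination 2*ρ''*he1 - he2]
    exact mul_neg_of_neg_of_pos (by linarith) (by linarith)

lemma scf_T_eq (a : ℤ) (ha : 0 ≤ a) (ρ ρ' ρ'' : ℝ)
    (hρ : ρ^3 - a*ρ^2 - (a+3)*ρ - 1 = 0)
    (hρ' : ρ'^3 - a*ρ'^2 - (a+3)*ρ' - 1 = 0)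
    (hρ'' : ρ''^3 - a*ρ''^2 - (a+3)*ρ'' - 1 = 0)
    (hb1 : (a:ℝ) + 1 < ρ) (hb2 : -2 < ρ' ∧ ρ' < -1) (hb3 : -1 < ρ'' ∧ ρ'' < 0)
    (x y z : ℤ) :
    (((x:ℝ) + y*ρ + z*ρ^2) / (3*ρ^2 - 2*(a:ℝ)*ρ - ((a:ℝ)+3))) * (1 + ρ + ρ^2)
    + (((x:ℝ) + y*ρ' + z*ρ'^2) / (3*ρ'^2 - 2*(a:ℝ)*ρ' - ((a:ℝ)+3))) * (1 + ρ' + ρ'^2)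
    + (((x:ℝ) + y*ρ'' + z*ρ''^2) / (3*ρ''^2 - 2*(a:ℝ)*ρ'' - ((a:ℝ)+3))) * (1 + ρ'' + ρ''^2)
    = ((1*z + 1*(y+a*z) + 1*(x+a*y+(a^2+a+3)*z) : ℤ) : ℝ) := by
  obtain ⟨hb2a, hb2b⟩ := hb2
  obtain ⟨hb3a, hb3b⟩ := hb3
  have haR : (0:ℝ) ≤ (a:ℝ) := by exact_mod_cast ha
  have h12 : ρ ≠ ρ' := by intro hh; rw [hh] at hb1; linarith
  have h13 : ρ ≠ ρ'' := by intro hh; rw [hh] at hb1; linarith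
  have h23 : ρ' ≠ ρ'' := by intro hh; rw [hh] at hb2b; linarith
  obtain ⟨he1, he2, he3⟩ := scf_vieta a ρ ρ' ρ'' hρ hρ' hρ'' h12 h13 h23
  have hd1 : 3*ρ^2 - 2*(a:ℝ)*ρ - ((a:ℝ)+3) = (ρ-ρ')*(ρ-ρ'') := by
    linear_combination 2*ρ*he1 - he2
  have hd2 : 3*ρ'^2 - 2*(a:ℝ)*ρ' - ((a:ℝ)+3) = (ρ'-ρ)*(ρ'-ρ'') := by
    linear_combination 2*ρ'*he1 - he2
  have hd3 : 3*ρ''^2 - 2*(a:ℝ)*ρ'' - ((a:ℝ)+3) = (ρ''-ρ)*(ρ''-ρ') := by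
    linear_combination 2*ρ''*he1 - he2
  have e := scf_trace a ρ ρ' ρ'' hρ hρ' hρ'' h12 h13 h23 hd1 hd2 hd3 1 1 1 x y z
  rw [← e]
  push_cast
  ring

set_option maxHeartbeats 1000000 in
lemma scf_ge2 (a : ℤ) (ha : 0 ≤ a) (ρ ρ' ρ'' : ℝ)
    (hρ : ρ^3 - a*ρ^2 - (a+3)*ρ - 1 = 0)
    (hρ' : ρ'^3 - a*ρ'^2 - (a+3)*ρ' - 1 = 0)
    (hρ'' : ρ''^3 - a*ρ''^2 - (a+3)*ρ'' - 1 = 0)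
    (hb1 : (a:ℝ) + 1 < ρ) (hb2 : -2 < ρ' ∧ ρ' < -1) (hb3 : -1 < ρ'' ∧ ρ'' < 0)
    (x y z : ℤ)
    (hpρ : (0:ℝ) < ((x:ℝ) + y*ρ + z*ρ^2) / (3*ρ^2 - 2*(a:ℝ)*ρ - ((a:ℝ)+3)))
    (hpρ' : (0:ℝ) < ((x:ℝ) + y*ρ' + z*ρ'^2) / (3*ρ'^2 - 2*(a:ℝ)*ρ' - ((a:ℝ)+3)))
    (hpρ'' : (0:ℝ) < ((x:ℝ) + y*ρ'' + z*ρ''^2) / (3*ρ''^2 - 2*(a:ℝ)*ρ'' - ((a:ℝ)+3))) :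
    2 ≤ 1*z + 1*(y+a*z) + 1*(x+a*y+(a^2+a+3)*z) := by
  obtain ⟨hb2a, hb2b⟩ := hb2
  obtain ⟨hb3a, hb3b⟩ := hb3
  have haR : (0:ℝ) ≤ (a:ℝ) := by exact_mod_cast ha
  have h12 : ρ ≠ ρ' := by intro hh; rw [hh] at hb1; linarith
  have h13 : ρ ≠ ρ'' := by intro hh; rw [hh] at hb1; linarith
  have h23 : ρ' ≠ ρ'' := by intro hh; rw [hh] at hb2b; linarith
  obtain ⟨he1, he2, he3⟩ := scf_vieta a ρ ρ' ρ'' hρ hρ' hρ'' h12 h13 h23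
  have hd1 : 3*ρ^2 - 2*(a:ℝ)*ρ - ((a:ℝ)+3) = (ρ-ρ')*(ρ-ρ'') := by
    linear_combination 2*ρ*he1 - he2
  have hd2 : 3*ρ'^2 - 2*(a:ℝ)*ρ' - ((a:ℝ)+3) = (ρ'-ρ)*(ρ'-ρ'') := by
    linear_combination 2*ρ'*he1 - he2
  have hd3 : 3*ρ''^2 - 2*(a:ℝ)*ρ'' - ((a:ℝ)+3) = (ρ''-ρ)*(ρ''-ρ') := by
    linear_combination 2*ρ''*he1 - he2
  have e0 := scf_trace a ρ ρ' ρ'' hρ hρ' hρ'' h12 h13 h23 hd1 hd2 hd3 1 0 0 x y z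
  have e2 := scf_trace a ρ ρ' ρ'' hρ hρ' hρ'' h12 h13 h23 hd1 hd2 hd3 0 0 1 x y z
  have e3 := scf_trace a ρ ρ' ρ'' hρ hρ' hρ'' h12 h13 h23 hd1 hd2 hd3 1 2 1 x y z
  have p0 : (0:ℝ) < ((1*z + 0*(y+a*z) + 0*(x+a*y+(a^2+a+3)*z) : ℤ) : ℝ) := by
    rw [← e0]
    have c1 : (0:ℝ) < ((1:ℤ):ℝ) + ((0:ℤ):ℝ)*ρ + ((0:ℤ):ℝ)*ρ^2 := by push_cast; norm_num
    have c2 : (0:ℝ) < ((1:ℤ):ℝ) + ((0:ℤ):ℝ)*ρ' + ((0:ℤ):ℝ)*ρ'^2 := by push_cast; norm_num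
    have c3 : (0:ℝ) < ((1:ℤ):ℝ) + ((0:ℤ):ℝ)*ρ'' + ((0:ℤ):ℝ)*ρ''^2 := by push_cast; norm_num
    exact add_pos (add_pos (mul_pos c1 hpρ) (mul_pos c2 hpρ')) (mul_pos c3 hpρ'')
  have p2 : (0:ℝ) < ((0*z + 0*(y+a*z) + 1*(x+a*y+(a^2+a+3)*z) : ℤ) : ℝ) := by
    rw [← e2]
    have c1 : (0:ℝ) < ((0:ℤ):ℝ) + ((0:ℤ):ℝ)*ρ + ((1:ℤ):ℝ)*ρ^2 := by
      push_cast; nlinarith [mul_pos (show (0:ℝ) < ρ by linarith) (show (0:ℝ) < ρ by linarith)]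
    have c2 : (0:ℝ) < ((0:ℤ):ℝ) + ((0:ℤ):ℝ)*ρ' + ((1:ℤ):ℝ)*ρ'^2 := by
      push_cast; nlinarith [mul_pos_of_neg_of_neg (show ρ' < 0 by linarith) (show ρ' < 0 by linarith)]
    have c3 : (0:ℝ) < ((0:ℤ):ℝ) + ((0:ℤ):ℝ)*ρ'' + ((1:ℤ):ℝ)*ρ''^2 := by
      push_cast; nlinarith [mul_pos_of_neg_of_neg (show ρ'' < 0 by linarith) (show ρ'' < 0 by linarith)]
    exact add_pos (add_pos (mul_pos c1 hpρ) (mul_pos c2 hpρ')) (mul_pos c3 hpρ'')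
  have p3 : (0:ℝ) < ((1*z + 2*(y+a*z) + 1*(x+a*y+(a^2+a+3)*z) : ℤ) : ℝ) := by
    rw [← e3]
    have c1 : (0:ℝ) < ((1:ℤ):ℝ) + ((2:ℤ):ℝ)*ρ + ((1:ℤ):ℝ)*ρ^2 := by
      push_cast; nlinarith [mul_pos (show (0:ℝ) < 1+ρ by linarith) (show (0:ℝ) < 1+ρ by linarith)]
    have c2 : (0:ℝ) < ((1:ℤ):ℝ) + ((2:ℤ):ℝ)*ρ' + ((1:ℤ):ℝ)*ρ'^2 := by
      push_cast; nlinarith [mul_pos_of_neg_of_neg (show 1+ρ' < 0 by linarith) (show 1+ρ' < 0 by linarith)]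
    have c3 : (0:ℝ) < ((1:ℤ):ℝ) + ((2:ℤ):ℝ)*ρ'' + ((1:ℤ):ℝ)*ρ''^2 := by
      push_cast; nlinarith [mul_pos (show (0:ℝ) < 1+ρ'' by linarith) (show (0:ℝ) < 1+ρ'' by linarith)]
    exact add_pos (add_pos (mul_pos c1 hpρ) (mul_pos c2 hpρ')) (mul_pos c3 hpρ'')
  have i0 : 0 < 1*z + 0*(y+a*z) + 0*(x+a*y+(a^2+a+3)*z) := by exact_mod_cast p0
  have i2 : 0 < 0*z + 0*(y+a*z) + 1*(x+a*y+(a^2+a+3)*z) := by exact_mod_cast p2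
  have i3 : 0 < 1*z + 2*(y+a*z) + 1*(x+a*y+(a^2+a+3)*z) := by exact_mod_cast p3
  clear e0 e2 e3 p0 p2 p3 hpρ hpρ' hpρ'' hd1 hd2 hd3 he1 he2 he3 hρ hρ' hρ''
  have key : 2*(1*z + 1*(y+a*z) + 1*(x+a*y+(a^2+a+3)*z))
      = (1*z + 0*(y+a*z) + 0*(x+a*y+(a^2+a+3)*z)) + (0*z + 0*(y+a*z) + 1*(x+a*y+(a^2+a+3)*z))
        + (1*z + 2*(y+a*z) + 1*(x+a*y+(a^2+a+3)*z)) := by ring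
  linarith [i0, i2, i3, key]

set_option maxHeartbeats 1000000 in
theorem simplest_cubic_exceptional_element (a : ℤ) (ha : 0 ≤ a) (ρ ρ' ρ'' : ℝ)
    (hρ : ρ^3 - a*ρ^2 - (a+3)*ρ - 1 = 0)
    (hρ' : ρ'^3 - a*ρ'^2 - (a+3)*ρ' - 1 = 0)
    (hρ'' : ρ''^3 - a*ρ''^2 - (a+3)*ρ'' - 1 = 0)
    (hb1 : (a:ℝ) + 1 < ρ) (hb2 : -2 < ρ' ∧ ρ' < -1) (hb3 : -1 < ρ'' ∧ ρ'' < 0) :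
    -- elements of the codifferent O_K^∨ = (1/f'(ρ))·ℤ[ρ] and their conjugates:
    let δ : ℤ → ℤ → ℤ → ℝ → ℝ := fun x y z r =>
      ((x:ℝ) + y*r + z*r^2) / (3*r^2 - 2*a*r - (a+3))
    -- the trace Tr((1+ρ+ρ²)·δ):
    let T : ℤ → ℤ → ℤ → ℝ := fun x y z =>
      δ x y z ρ * (1 + ρ + ρ^2) + δ x y z ρ' * (1 + ρ' + ρ'^2)
        + δ x y z ρ'' * (1 + ρ'' + ρ''^2)
    -- 1+ρ+ρ² is totally positive
    (∀ r ∈ ({ρ, ρ', ρ''} : Set ℝ), 0 < 1 + r + r^2) ∧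
    -- 1+ρ+ρ² is indecomposable in O_K = ℤ[ρ]
    (¬ ∃ b₀ b₁ b₂ c₀ c₁ c₂ : ℤ,
      (∀ r ∈ ({ρ, ρ', ρ''} : Set ℝ), 0 < (b₀:ℝ) + b₁*r + b₂*r^2) ∧
      (∀ r ∈ ({ρ, ρ', ρ''} : Set ℝ), 0 < (c₀:ℝ) + c₁*r + c₂*r^2) ∧
      (1 + ρ + ρ^2 = ((b₀:ℝ) + b₁*ρ + b₂*ρ^2) + ((c₀:ℝ) + c₁*ρ + c₂*ρ^2))) ∧
    -- the minimum of Tr((1+ρ+ρ²)δ) over totally positive δ ∈ O_K^∨ equals 2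
    (∃ x y z : ℤ, (∀ r ∈ ({ρ, ρ', ρ''} : Set ℝ), 0 < δ x y z r) ∧ T x y z = 2) ∧
    (∀ x y z : ℤ, (∀ r ∈ ({ρ, ρ', ρ''} : Set ℝ), 0 < δ x y z r) → 2 ≤ T x y z) := by
  intro δ T
  have memρ : ρ ∈ ({ρ, ρ', ρ''} : Set ℝ) := Set.mem_insert _ _
  have memρ' : ρ' ∈ ({ρ, ρ', ρ''} : Set ℝ) := Set.mem_insert_of_mem _ (Set.mem_insert _ _)
  have memρ'' : ρ'' ∈ ({ρ, ρ', ρ''} : Set ℝ) :=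
    Set.mem_insert_of_mem _ (Set.mem_insert_of_mem _ rfl)
  obtain ⟨hf1, hf2, hf3⟩ := scf_fp_signs a ha ρ ρ' ρ'' hρ hρ' hρ'' hb1 hb2 hb3
  refine ⟨?_, scf_indecomposable a ha ρ ρ' ρ'' hρ hρ' hρ'' hb1 hb2 hb3, ?_, ?_⟩
  · intro r hr
    nlinarith [sq_nonneg (2*r + 1)]
  · refine ⟨-(a+2), -a, 1, ?_, ?_⟩
    · intro r hr
      simp only [Set.mem_insert_iff, Set.mem_singleton_iff] at hr
      rcases hr with rfl | rfl | rfl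
      · exact div_pos (scf_n2_pos_rho a ha r hρ hb1) hf1
      · exact div_pos (scf_n2_pos_rho' a r hρ' hb2.1 hb2.2) hf2
      · exact div_pos_of_neg_of_neg (scf_n2_neg_rho'' a r hρ'' hb3.1 hb3.2) hf3
    · have e : T (-(a+2)) (-a) 1
          = ((1*1 + 1*(-a+a*1) + 1*(-(a+2)+a*(-a)+(a^2+a+3)*1) : ℤ) : ℝ) :=
        scf_T_eq a ha ρ ρ' ρ'' hρ hρ' hρ'' hb1 hb2 hb3 (-(a+2)) (-a) 1
      rw [e]
      push_cast
      ring
  · intro x y z hpos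
    have h2le := scf_ge2 a ha ρ ρ' ρ'' hρ hρ' hρ'' hb1 hb2 hb3 x y z
      (hpos ρ memρ) (hpos ρ' memρ') (hpos ρ'' memρ'')
    have e : T x y z = ((1*z + 1*(y+a*z) + 1*(x+a*y+(a^2+a+3)*z) : ℤ) : ℝ) :=
      scf_T_eq a ha ρ ρ' ρ'' hρ hρ' hρ'' hb1 hb2 hb3 x y z
    rw [e]
    exact_mod_cast h2le
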